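/- Let P = Σ_{i=1}^m A_i X^i be a polynomial over FDDS without constant term. If at least one coefficient A_i is cancelable, then P is injective up to isomorphism: for all FDDS X, Y, if P(X) ≅ P(Y) then X ≅ Y. -/

import Mathlib

/-- Isomorphism of finite dynamical systems: a bijection commuting with the maps. -/
def FddsIso {α β : Type} (f : α → α) (g : β → β) : Prop :=
  ∃ e : α ≃ β, ⇑e ∘ f = g ∘ ⇑e

/-- A state is periodic if some positive iterate fixes it. -/
def IsPeriodicState {α : Type} (f : α → α) (x : α) : Prop :=
  ∃ n > 0, f^[n] x = x

/-- The vertex set of the unroll of `(α, f)`. -/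
def UnrollSet {α : Type} (f : α → α) : Set (α × ℕ) :=
  {p | IsPeriodicState f (f^[p.2] p.1)}

/-- The parent map of the unroll. -/
def unrollMap {α : Type} (f : α → α) (q : UnrollSet f) : UnrollSet f :=
  if h : q.1.2 = 0 then q
  else ⟨(f q.1.1, q.1.2 - 1), by
    obtain ⟨⟨x, k⟩, hq⟩ := q
    simp only at h
    obtain ⟨k', rfl⟩ := Nat.exists_eq_succ_of_ne_zero h
    simpa [UnrollSet, Function.iterate_succ_apply] using hq⟩

/-- Isomorphism of unrolls. -/
def UnrollIso {α β : Type} (f : α → α) (g : β → β) : Prop :=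
  ∃ φ : UnrollSet f ≃ UnrollSet g, ⇑φ ∘ unrollMap f = unrollMap g ∘ ⇑φ

/-- Vertices of the cut at depth `n` of the unroll. -/
def CutSet {α : Type} (f : α → α) (n : ℕ) : Set (α × ℕ) :=
  {p | p ∈ UnrollSet f ∧ p.2 ≤ n}

/-- The parent map of the cut at depth `n`. -/
def cutMap {α : Type} (f : α → α) (n : ℕ) (q : CutSet f n) : CutSet f n :=
  if h : q.1.2 = 0 then q
  else ⟨(f q.1.1, q.1.2 - 1), by
    obtain ⟨⟨x, k⟩, hq⟩ := q
    obtain ⟨hq1, hq2⟩ := hq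
    simp only at h hq2 ⊢
    obtain ⟨k', rfl⟩ := Nat.exists_eq_succ_of_ne_zero h
    refine ⟨by simpa [UnrollSet, Function.iterate_succ_apply] using hq1, by omega⟩⟩

/-- Isomorphism of cuts at depth `n`. -/
def CutIso {α β : Type} (f : α → α) (g : β → β) (n : ℕ) : Prop :=
  ∃ φ : CutSet f n ≃ CutSet g n, ⇑φ ∘ cutMap f n = cutMap g n ∘ ⇑φ

/-- The states of the components whose cycle length divides `p`. -/
def DivSet {α : Type} (f : α → α) (p : ℕ) : Set α :=
  {x | ∃ N, f^[N + p] x = f^[N] x}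

/-- The restriction of `f` to `DivSet f p`. -/
def divMap {α : Type} (f : α → α) (p : ℕ) (q : DivSet f p) : DivSet f p :=
  ⟨f q.1, by
    obtain ⟨x, N, hN⟩ := q
    exact ⟨N, by
      rw [← Function.iterate_succ_apply, ← Function.iterate_succ_apply,
        Function.iterate_succ_apply', Function.iterate_succ_apply', hN]⟩⟩

/-- `k`-th power of an FDDS: map on `Fin k → α`. -/
def powMap {α : Type} (f : α → α) (k : ℕ) (v : Fin k → α) : Fin k → α := f ∘ v

/-- Evaluation of the polynomial `Σ_{i=0}^m A_i X^i` at `(α, f)`. -/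
def polyEval {m : ℕ} {γ : Fin (m + 1) → Type} (g : ∀ i, γ i → γ i)
    {α : Type} (f : α → α)
    (x : Σ i : Fin (m + 1), γ i × (Fin i.val → α)) :
    Σ i : Fin (m + 1), γ i × (Fin i.val → α) :=
  ⟨x.1, g x.1 x.2.1, f ∘ x.2.2⟩

/-- Evaluation of the constant-free polynomial `Σ_{i=1}^m A_i X^i` at `(α, f)`. -/
def polyEvalNC {m : ℕ} {γ : Fin m → Type} (g : ∀ i, γ i → γ i)
    {α : Type} (f : α → α)
    (x : Σ i : Fin m, γ i × (Fin (i.val + 1) → α)) :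
    Σ i : Fin m, γ i × (Fin (i.val + 1) → α) :=
  ⟨x.1, g x.1 x.2.1, f ∘ x.2.2⟩

/-- An FDDS is cancelable if it can be canceled from products. -/
def Cancelable {α : Type} (f : α → α) : Prop :=
  ∀ (β γ : Type) [Fintype β] [Fintype γ] (g : β → β) (h : γ → γ),
    FddsIso (Prod.map f g) (Prod.map f h) → FddsIso g h

section MorBasics

/-- Morphisms of dynamical systems. -/
abbrev Mor {α β : Type} (f : α → α) (g : β → β) : Type :=
  {h : α → β // ∀ x, h (f x) = g (h x)}

/-- Injective morphisms. -/
abbrev IMor {α β : Type} (f : α → α) (g : β → β) : Type :=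
  {h : α → β // Function.Injective h ∧ ∀ x, h (f x) = g (h x)}

noncomputable def hcount {α β : Type} (f : α → α) (g : β → β) : ℕ := Nat.card (Mor f g)
noncomputable def icount {α β : Type} (f : α → α) (g : β → β) : ℕ := Nat.card (IMor f g)

theorem fddsIso_refl {α : Type} (f : α → α) : FddsIso f f := ⟨Equiv.refl α, rfl⟩

theorem FddsIso.pointwise {α β : Type} {f : α → α} {g : β → β} :
    FddsIso f g ↔ ∃ e : α ≃ β, ∀ x, e (f x) = g (e x) := by
  constructor
  · rintro ⟨e, he⟩; exact ⟨e, fun x => congrFun he x⟩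
  · rintro ⟨e, he⟩; exact ⟨e, funext he⟩

theorem fddsIso_symm {α β : Type} {f : α → α} {g : β → β} (h : FddsIso f g) : FddsIso g f := by
  obtain ⟨e, he⟩ := FddsIso.pointwise.mp h
  refine FddsIso.pointwise.mpr ⟨e.symm, fun y => ?_⟩
  apply e.injective
  rw [he, Equiv.apply_symm_apply, Equiv.apply_symm_apply]

private theorem symm_comm {γ α : Type} {c : γ → γ} {c' : α → α}
    (e : γ ≃ α) (he : ∀ x, e (c x) = c' (e x)) (x : α) :
    e.symm (c' x) = c (e.symm x) := by
  apply e.injective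
  rw [he, Equiv.apply_symm_apply, Equiv.apply_symm_apply]

/-- Transport `Mor` along an isomorphism of the target. -/
noncomputable def morCongrRight {γ α β : Type} (c : γ → γ) {f : α → α} {g : β → β}
    (e : α ≃ β) (he : ∀ x, e (f x) = g (e x)) : Mor c f ≃ Mor c g where
  toFun h := ⟨⇑e ∘ h.1, fun x => by simp [h.2 x, he]⟩
  invFun h := ⟨⇑e.symm ∘ h.1, fun x => by
    simp only [Function.comp_apply, h.2 x, symm_comm e he]⟩
  left_inv h := by ext x; simp
  right_inv h := by ext x; simp

/-- Transport `Mor` along an isomorphism of the source. -/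
noncomputable def morCongrLeft {γ α β : Type} {c : γ → γ} {c' : α → α} (g : β → β)
    (e : γ ≃ α) (he : ∀ x, e (c x) = c' (e x)) : Mor c g ≃ Mor c' g where
  toFun h := ⟨h.1 ∘ ⇑e.symm, fun x => by
    simp only [Function.comp_apply, symm_comm e he, h.2]⟩
  invFun h := ⟨h.1 ∘ ⇑e, fun x => by simp only [Function.comp_apply, he x, h.2]⟩
  left_inv h := by ext x; simp
  right_inv h := by ext x; simp

/-- Transport `IMor` along an isomorphism of the source. -/
noncomputable def imorCongrLeft {γ α β : Type} {c : γ → γ} {c' : α → α} (g : β → β)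
    (e : γ ≃ α) (he : ∀ x, e (c x) = c' (e x)) : IMor c g ≃ IMor c' g where
  toFun h := ⟨h.1 ∘ ⇑e.symm, h.2.1.comp e.symm.injective, fun x => by
    simp only [Function.comp_apply, symm_comm e he, h.2.2]⟩
  invFun h := ⟨h.1 ∘ ⇑e, h.2.1.comp e.injective, fun x => by
    simp only [Function.comp_apply, he x, h.2.2]⟩
  left_inv h := by ext x; simp
  right_inv h := by ext x; simp

theorem hcount_congr_right {γ α β : Type} (c : γ → γ) {f : α → α} {g : β → β}
    (h : FddsIso f g) : hcount c f = hcount c g := by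
  obtain ⟨e, he⟩ := FddsIso.pointwise.mp h
  exact Nat.card_congr (morCongrRight c e he)

theorem hcount_congr_left {γ α β : Type} {c : γ → γ} {c' : α → α} (g : β → β)
    (h : FddsIso c c') : hcount c g = hcount c' g := by
  obtain ⟨e, he⟩ := FddsIso.pointwise.mp h
  exact Nat.card_congr (morCongrLeft g e he)

theorem icount_congr_left {γ α β : Type} {c : γ → γ} {c' : α → α} (g : β → β)
    (h : FddsIso c c') : icount c g = icount c' g := by
  obtain ⟨e, he⟩ := FddsIso.pointwise.mp h
  exact Nat.card_congr (imorCongrLeft g e he)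

/-- Product formula. -/
noncomputable def morProd {γ α β : Type} (c : γ → γ) (f : α → α) (g : β → β) :
    Mor c (Prod.map f g) ≃ Mor c f × Mor c g where
  toFun h := ⟨⟨fun t => (h.1 t).1, fun t => congrArg Prod.fst (h.2 t)⟩,
              ⟨fun t => (h.1 t).2, fun t => congrArg Prod.snd (h.2 t)⟩⟩
  invFun p := ⟨fun t => (p.1.1 t, p.2.1 t), fun t => by
    simp [Prod.map, p.1.2 t, p.2.2 t]⟩
  left_inv h := by ext t <;> simp
  right_inv p := by ext t <;> simp

theorem hcount_prod {γ α β : Type} (c : γ → γ) (f : α → α) (g : β → β) :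
    hcount c (Prod.map f g) = hcount c f * hcount c g := by
  rw [hcount, Nat.card_congr (morProd c f g), Nat.card_prod]; rfl

/-- Power formula. -/
noncomputable def morPow {γ α : Type} (c : γ → γ) (f : α → α) (k : ℕ) :
    Mor c (powMap f k) ≃ (Fin k → Mor c f) where
  toFun h := fun i => ⟨fun t => h.1 t i, fun t => congrFun (h.2 t) i⟩
  invFun p := ⟨fun t i => (p i).1 t, fun t => by funext i; exact (p i).2 t⟩
  left_inv h := by ext t x; simp
  right_inv p := by ext i t; simp

theorem hcount_pow {γ α : Type} (c : γ → γ) (f : α → α) (k : ℕ) :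
    hcount c (powMap f k) = (hcount c f) ^ k := by
  rw [hcount, Nat.card_congr (morPow c f k), Nat.card_pi]
  simp [hcount]

end MorBasics


section Conn

/-- A dynamical system is connected if it is nonempty and any two points merge. -/
def Conn {γ : Type} (c : γ → γ) : Prop :=
  Nonempty γ ∧ ∀ a b, ∃ m n, c^[m] a = c^[n] b

theorem nat_card_sigma {J : Type} [Fintype J] (M : J → Type) [∀ j, Finite (M j)] :
    Nat.card (Σ j, M j) = ∑ j, Nat.card (M j) := by
  letI : ∀ j, Fintype (M j) := fun j => Fintype.ofFinite _
  simp [Nat.card_eq_fintype_card]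

theorem nat_card_pi {J : Type} [Fintype J] (M : J → Type) [∀ j, Finite (M j)] :
    Nat.card (∀ j, M j) = ∏ j, Nat.card (M j) := Nat.card_pi

/-- The index-preserving map on a sigma type. -/
def sigMap {J : Type} {β : J → Type} (G : ∀ j, β j → β j) (x : Σ j, β j) : Σ j, β j :=
  ⟨x.1, G x.1 x.2⟩

theorem sigMap_iterate_fst {J : Type} {β : J → Type} (G : ∀ j, β j → β j)
    (k : ℕ) (x : Σ j, β j) : ((sigMap G)^[k] x).1 = x.1 := by
  induction k generalizing x with
  | zero => rfl
  | succ n ih => rw [Function.iterate_succ_apply, ih]; rfl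

theorem mor_iterate {γ δ : Type} {c : γ → γ} {x : δ → δ} (h : Mor c x) (k : ℕ) (t : γ) :
    h.1 (c^[k] t) = x^[k] (h.1 t) := by
  induction k generalizing t with
  | zero => rfl
  | succ n ih => rw [Function.iterate_succ_apply, Function.iterate_succ_apply, ih, h.2]

private theorem sigma_eta {J : Type} {β : J → Type} (x : Σ j, β j) {j₀ : J} (e : x.1 = j₀) :
    x = ⟨j₀, cast (congrArg β e) x.2⟩ := by
  cases x; cases e; rfl

/-- Morphisms from a connected system into a sigma system. -/
noncomputable def morSigma {γ : Type} (c : γ → γ) (t₀ : γ)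
    (hc : ∀ a b : γ, ∃ m n, c^[m] a = c^[n] b)
    {J : Type} {β : J → Type} (G : ∀ j, β j → β j) :
    (Σ j, Mor c (G j)) ≃ Mor c (sigMap G) := by
  have const : ∀ (h : Mor c (sigMap G)) (t : γ), (h.1 t).1 = (h.1 t₀).1 := by
    intro h t
    obtain ⟨m, n, hmn⟩ := hc t t₀
    have := congrArg Sigma.fst ((mor_iterate h m t).symm.trans
      ((congrArg h.1 hmn).trans (mor_iterate h n t₀)))
    simpa [sigMap_iterate_fst] using this
  refine Equiv.ofBijective
    (fun p => ⟨fun t => ⟨p.1, (p.2.1 t : β p.1)⟩, fun t =>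
      congrArg (Sigma.mk p.1) (p.2.2 t)⟩) ⟨?_, ?_⟩
  · rintro ⟨j, k⟩ ⟨j', k'⟩ hjk
    have h0 := congrFun (congrArg Subtype.val hjk) t₀
    have hj : j = j' := congrArg Sigma.fst h0
    subst hj
    refine congrArg (Sigma.mk j) (Subtype.ext (funext fun t => ?_))
    exact sigma_mk_injective (congrFun (congrArg Subtype.val hjk) t)
  · intro h
    refine ⟨⟨(h.1 t₀).1, fun t => cast (congrArg β (const h t)) (h.1 t).2, fun t => ?_⟩, ?_⟩
    · have key : (⟨(h.1 t₀).1, cast (congrArg β (const h (c t))) (h.1 (c t)).2⟩ : Σ j, β j)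
          = ⟨(h.1 t₀).1, G (h.1 t₀).1 (cast (congrArg β (const h t)) (h.1 t).2)⟩ :=
        calc (⟨(h.1 t₀).1, cast (congrArg β (const h (c t))) (h.1 (c t)).2⟩ : Σ j, β j)
            = h.1 (c t) := (sigma_eta (h.1 (c t)) (const h (c t))).symm
          _ = sigMap G (h.1 t) := h.2 t
          _ = sigMap G ⟨(h.1 t₀).1, cast (congrArg β (const h t)) (h.1 t).2⟩ :=
              congrArg (sigMap G) (sigma_eta (h.1 t) (const h t))
          _ = ⟨(h.1 t₀).1, G (h.1 t₀).1 (cast (congrArg β (const h t)) (h.1 t).2)⟩ := rfl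
      exact eq_of_heq (Sigma.mk.inj_iff.mp key).2
    · apply Subtype.ext; funext t
      exact (sigma_eta (h.1 t) (const h t)).symm

theorem hcount_sigma {γ : Type} {c : γ → γ} (hne : Nonempty γ)
    (hc : ∀ a b : γ, ∃ m n, c^[m] a = c^[n] b)
    {J : Type} [Fintype J] {β : J → Type} [∀ j, Finite (β j)] [Finite γ]
    (G : ∀ j, β j → β j) :
    hcount c (sigMap G) = ∑ j, hcount c (G j) := by
  obtain ⟨t₀⟩ := hne
  rw [hcount, Nat.card_congr (morSigma c t₀ hc G).symm]
  exact nat_card_sigma _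

end Conn

section Components

variable {γ : Type} (c : γ → γ)

/-- The connectivity setoid. -/
def connS : Setoid γ where
  r a b := ∃ m n, c^[m] a = c^[n] b
  iseqv := by
    constructor
    · exact fun a => ⟨0, 0, rfl⟩
    · rintro a b ⟨m, n, h⟩; exact ⟨n, m, h.symm⟩
    · rintro a b d ⟨m, n, h1⟩ ⟨m', n', h2⟩
      refine ⟨m' + m, n + n', ?_⟩
      calc c^[m' + m] a = c^[m'] (c^[m] a) := Function.iterate_add_apply c m' m a
        _ = c^[m'] (c^[n] b) := by rw [h1]
        _ = c^[m' + n] b := (Function.iterate_add_apply c m' n b).symm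
        _ = c^[n + m'] b := by rw [Nat.add_comm]
        _ = c^[n] (c^[m'] b) := Function.iterate_add_apply c n m' b
        _ = c^[n] (c^[n'] d) := by rw [h2]
        _ = c^[n + n'] d := (Function.iterate_add_apply c n n' d).symm

/-- One connected component. -/
def Cls (q : Quotient (connS c)) : Type := {t : γ // Quotient.mk (connS c) t = q}

theorem cls_rel (t : γ) : Quotient.mk (connS c) (c t) = Quotient.mk (connS c) t :=
  Quotient.sound ⟨0, 1, rfl⟩

/-- The restriction of the dynamics to one component. -/
def clsMap (q : Quotient (connS c)) (t : Cls c q) : Cls c q :=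
  ⟨c t.1, (cls_rel c t.1).trans t.2⟩

theorem clsMap_iterate (q : Quotient (connS c)) (k : ℕ) (t : Cls c q) :
    ((clsMap c q)^[k] t).1 = c^[k] t.1 := by
  induction k generalizing t with
  | zero => rfl
  | succ n ih => rw [Function.iterate_succ_apply, Function.iterate_succ_apply, ih]; rfl

instance (q : Quotient (connS c)) [Finite γ] : Finite (Cls c q) := by
  unfold Cls; infer_instance

theorem conn_clsMap (q : Quotient (connS c)) : Conn (clsMap c q) := by
  constructor
  · obtain ⟨t, ht⟩ := Quotient.exists_rep q
    exact ⟨⟨t, ht⟩⟩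
  · rintro ⟨a, ha⟩ ⟨b, hb⟩
    obtain ⟨m, n, h⟩ := Quotient.exact (ha.trans hb.symm)
    exact ⟨m, n, Subtype.ext ((clsMap_iterate c q m ⟨a, ha⟩).trans (h.trans (clsMap_iterate c q n ⟨b, hb⟩).symm))⟩

private theorem cls_congr {δ : Type} {x : δ → δ} (H : ∀ q, Mor (clsMap c q) x)
    {q q' : Quotient (connS c)} (e : q = q') (t : Cls c q) (t' : Cls c q')
    (h : t.1 = t'.1) : (H q).1 t = (H q').1 t' := by
  subst e; exact congrArg (H q).1 (Subtype.ext h)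

/-- Decomposition of morphisms along connected components of the source. -/
noncomputable def morComponents {δ : Type} (x : δ → δ) :
    Mor c x ≃ ∀ q, Mor (clsMap c q) x where
  toFun h := fun q => ⟨fun t => h.1 t.1, fun t => h.2 t.1⟩
  invFun H := ⟨fun t => (H (Quotient.mk (connS c) t)).1 ⟨t, rfl⟩, fun t => by
    show (H (Quotient.mk (connS c) (c t))).1 ⟨c t, rfl⟩ = x ((H (Quotient.mk (connS c) t)).1 ⟨t, rfl⟩)
    rw [cls_congr c H (cls_rel c t) ⟨c t, rfl⟩ (clsMap c (Quotient.mk (connS c) t) ⟨t, rfl⟩) rfl]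
    exact (H (Quotient.mk (connS c) t)).2 ⟨t, rfl⟩⟩
  left_inv h := rfl
  right_inv H := by
    funext q; apply Subtype.ext; funext t
    exact cls_congr c H t.2 ⟨t.1, rfl⟩ t rfl

instance {γ' : Type} {c' : γ' → γ'} [Finite γ'] : Finite (Quotient (connS c')) :=
  Finite.of_surjective (Quotient.mk (connS c')) Quotient.exists_rep

noncomputable instance {γ' : Type} {c' : γ' → γ'} [Finite γ'] : Fintype (Quotient (connS c')) :=
  Fintype.ofFinite _

theorem hcount_components {δ : Type} [Finite γ] [Finite δ] (x : δ → δ) :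
    hcount c x = ∏ q : Quotient (connS c), hcount (clsMap c q) x := by
  rw [hcount, Nat.card_congr (morComponents c x), nat_card_pi]
  rfl

/-- If two systems admit equally many morphisms from every connected finite system,
then from every finite system. -/
theorem hcount_eq_of_conn {α β : Type} [Finite α] [Finite β] {x : α → α} {y : β → β}
    (H : ∀ (γ : Type) [Finite γ] (c : γ → γ), Conn c → hcount c x = hcount c y) :
    ∀ (γ : Type) [Finite γ] (c : γ → γ), hcount c x = hcount c y := by
  intro γ _ c
  rw [hcount_components c x, hcount_components c y]
  exact Finset.prod_congr rfl fun q _ => H _ (clsMap c q) (conn_clsMap c q)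

end Components


section Lovasz

instance setoidFinite {C : Type} [Finite C] : Finite (Setoid C) :=
  Finite.of_injective (fun s => (⇑s : C → C → Prop))
    (fun a b h => Setoid.ext fun x y => iff_of_eq (congrFun (congrFun h x) y))

/-- Setoids compatible with the dynamics. -/
abbrev CompatS {C : Type} (c : C → C) : Type :=
  {s : Setoid C // ∀ x y, s x y → s (c x) (c y)}

noncomputable instance {C : Type} [Finite C] (c : C → C) : Fintype (CompatS c) :=
  Fintype.ofFinite _

/-- The quotient dynamical system. -/
def qMap {C : Type} {c : C → C} (π : CompatS c) (q : Quotient π.1) : Quotient π.1 :=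
  Quotient.map c (fun _ _ h => π.2 _ _ h) q

/-- Every morphism factors as an injective morphism from a compatible quotient. -/
noncomputable def morQuotEquiv {C X : Type} (c : C → C) (x : X → X) :
    (Σ π : CompatS c, IMor (qMap π) x) ≃ Mor c x := by
  refine Equiv.ofBijective (fun p => ⟨p.2.1 ∘ Quotient.mk _, fun t => ?_⟩) ⟨?_, ?_⟩
  · show p.2.1 (Quotient.mk _ (c t)) = x (p.2.1 (Quotient.mk _ t))
    rw [← Quotient.map_mk c (fun _ _ h => p.1.2 _ _ h) t]
    exact p.2.2.2 (Quotient.mk _ t)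
  · rintro ⟨π, k⟩ ⟨π', k'⟩ hp
    have hpt : ∀ t : C, k.1 (Quotient.mk π.1 t) = k'.1 (Quotient.mk π'.1 t) :=
      fun t => congrFun (congrArg Subtype.val hp) t
    have hπ : π = π' := by
      apply Subtype.ext
      apply Setoid.ext
      intro a b
      constructor
      · intro hab
        have h1 : k.1 (Quotient.mk π.1 a) = k.1 (Quotient.mk π.1 b) :=
          congrArg k.1 (Quotient.sound hab)
        have h2 : k'.1 (Quotient.mk π'.1 a) = k'.1 (Quotient.mk π'.1 b) := by
          rw [← hpt a, ← hpt b]; exact h1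
        exact Quotient.exact (k'.2.1 h2)
      · intro hab
        have h1 : k'.1 (Quotient.mk π'.1 a) = k'.1 (Quotient.mk π'.1 b) :=
          congrArg k'.1 (Quotient.sound hab)
        have h2 : k.1 (Quotient.mk π.1 a) = k.1 (Quotient.mk π.1 b) := by
          rw [hpt a, hpt b]; exact h1
        exact Quotient.exact (k.2.1 h2)
    subst hπ
    refine congrArg (Sigma.mk π) (Subtype.ext (funext fun q => ?_))
    induction q using Quotient.ind with
    | _ t => exact hpt t
  · intro h
    have compat : ∀ a b : C, Setoid.ker h.1 a b → Setoid.ker h.1 (c a) (c b) := by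
      intro a b hab
      show h.1 (c a) = h.1 (c b)
      rw [h.2 a, h.2 b]
      exact congrArg x hab
    refine ⟨⟨⟨Setoid.ker h.1, compat⟩,
      Quotient.lift h.1 (fun a b hab => hab), ?_, ?_⟩, ?_⟩
    · intro q q' hqq'
      induction q using Quotient.ind with
      | _ a =>
      induction q' using Quotient.ind with
      | _ b => exact Quotient.sound hqq'
    · intro q
      induction q using Quotient.ind with
      | _ t => exact h.2 t
    · exact Subtype.ext (funext fun t => rfl)

theorem hcount_eq_sum_icount {C X : Type} [Finite C] [Finite X] (c : C → C) (x : X → X) :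
    hcount c x = ∑ π : CompatS c, icount (qMap π) x := by
  rw [hcount, ← Nat.card_congr (morQuotEquiv c x), nat_card_sigma]
  rfl

/-- The bottom setoid is compatible. -/
def botC {C : Type} (c : C → C) : CompatS c :=
  ⟨⊥, fun x y h => by
    have : x = y := h
    rw [this]⟩

theorem qMap_botC_iso {C : Type} (c : C → C) : FddsIso (qMap (botC c)) c := by
  refine FddsIso.pointwise.mpr ⟨⟨Quotient.lift id (fun a b h => h), Quotient.mk _, ?_, fun a => rfl⟩, ?_⟩
  · intro q
    induction q using Quotient.ind with
    | _ t => rfl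
  · intro q
    induction q using Quotient.ind with
    | _ t => rfl

theorem compatS_ne_bot {C : Type} {c : C → C} (π : CompatS c) (h : π ≠ botC c) :
    ∃ a b : C, a ≠ b ∧ π.1 a b := by
  by_contra hab
  push_neg at hab
  apply h
  apply Subtype.ext
  apply Setoid.ext
  intro a b
  have : (⊥ : Setoid C) a b ↔ a = b := iff_of_eq (congrFun (congrFun Setoid.bot_def a) b)
  rw [show (botC c).1 = (⊥ : Setoid C) from rfl, this]
  constructor
  · intro hr
    by_contra hne
    exact hne (hab a b hne hr |>.elim)
  · intro he; exact he ▸ π.1.refl a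

theorem card_quot_lt {C : Type} [Finite C] {c : C → C} (π : CompatS c) (h : π ≠ botC c) :
    Nat.card (Quotient π.1) < Nat.card C := by
  obtain ⟨a, b, hne, hr⟩ := compatS_ne_bot π h
  letI : Fintype C := Fintype.ofFinite C
  letI : DecidableRel (fun x y : C => π.1 x y) := fun _ _ => Classical.dec _
  rw [Nat.card_eq_fintype_card, Nat.card_eq_fintype_card]
  exact Fintype.card_lt_of_surjective_not_injective (Quotient.mk π.1) Quotient.mk_surjective
    (fun hi => hne (hi (Quotient.sound hr)))

theorem icount_eq_of_hcount_eq {α β : Type} [Finite α] [Finite β] {x : α → α} {y : β → β}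
    (H : ∀ (C : Type) [Finite C] (c : C → C), hcount c x = hcount c y) :
    ∀ (C : Type) [Finite C] (c : C → C), icount c x = icount c y := by
  suffices key : ∀ (n : ℕ) (C : Type) [Finite C] (c : C → C), Nat.card C ≤ n →
      icount c x = icount c y by
    intro C _ c; exact key (Nat.card C) C c le_rfl
  intro n
  induction n with
  | zero =>
    intro C _ c hc
    have hE : IsEmpty C := by
      rcases Nat.card_eq_zero.mp (Nat.le_zero.mp hc) with h | h
      · exact h
      · exact ((not_finite_iff_infinite.mpr h) (by infer_instance)).elim
    have count1 : ∀ (δ : Type) (z : δ → δ), icount c z = 1 := by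
      intro δ z
      haveI : Nonempty (IMor c z) :=
        ⟨⟨hE.elim, fun a => hE.elim a, fun a => hE.elim a⟩⟩
      haveI : Subsingleton (IMor c z) :=
        ⟨fun a b => Subtype.ext (funext fun t => hE.elim t)⟩
      exact Nat.card_unique
    rw [count1 α x, count1 β y]
  | succ n ih =>
    intro C _ c hc
    have h1 := hcount_eq_sum_icount c x
    have h2 := hcount_eq_sum_icount c y
    rw [H C c, h2] at h1
    classical
    have hsplit : ∀ {δ : Type} (z : δ → δ),
        ∑ π : CompatS c, icount (qMap π) z
          = icount (qMap (botC c)) z + ∑ π ∈ Finset.univ.erase (botC c), icount (qMap π) z :=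
      fun z => (Finset.add_sum_erase _ _ (Finset.mem_univ _)).symm
    rw [hsplit x, hsplit y] at h1
    have hrest : ∑ π ∈ Finset.univ.erase (botC c), icount (qMap π) x
        = ∑ π ∈ Finset.univ.erase (botC c), icount (qMap π) y := by
      refine Finset.sum_congr rfl fun π hπ => ?_
      have hne := Finset.ne_of_mem_erase hπ
      have hlt := card_quot_lt π hne
      exact ih (Quotient π.1) (qMap π) (by omega)
    rw [hrest] at h1
    have := Nat.add_right_cancel h1
    rw [icount_congr_left x (qMap_botC_iso c), icount_congr_left y (qMap_botC_iso c)] at this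
    exact this.symm

theorem lovasz {α β : Type} [Finite α] [Finite β] {x : α → α} {y : β → β}
    (H : ∀ (C : Type) [Finite C] (c : C → C), hcount c x = hcount c y) :
    FddsIso x y := by
  have Hinj := icount_eq_of_hcount_eq H
  have hxx : 0 < icount x x :=
    Nat.card_pos_iff.mpr ⟨⟨⟨id, fun a b h => h, fun _ => rfl⟩⟩, by unfold IMor; infer_instance⟩
  have hyy : 0 < icount y y :=
    Nat.card_pos_iff.mpr ⟨⟨⟨id, fun a b h => h, fun _ => rfl⟩⟩, by unfold IMor; infer_instance⟩
  have hxy : 0 < icount x y := by rw [← Hinj α x]; exact hxx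
  have hyx : 0 < icount y x := by rw [Hinj β y]; exact hyy
  obtain ⟨h⟩ := (Nat.card_pos_iff.mp hxy).1
  obtain ⟨h'⟩ := (Nat.card_pos_iff.mp hyx).1
  have hcards : Nat.card α = Nat.card β :=
    le_antisymm (Nat.card_le_card_of_injective h.1 h.2.1)
      (Nat.card_le_card_of_injective h'.1 h'.2.1)
  have hbij : Function.Bijective h.1 :=
    (Nat.bijective_iff_injective_and_card h.1).mpr ⟨h.2.1, hcards⟩
  exact FddsIso.pointwise.mpr ⟨Equiv.ofBijective h.1 hbij, h.2.2⟩

end Lovasz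


theorem lovasz_conn {α β : Type} [Finite α] [Finite β] {x : α → α} {y : β → β}
    (H : ∀ (γ : Type) [Finite γ] (c : γ → γ), Conn c → hcount c x = hcount c y) :
    FddsIso x y :=
  lovasz (hcount_eq_of_conn H)

section Cycles

/-- The cycle of length `d`. -/
def cyc (d : ℕ) (z : ZMod d) : ZMod d := z + 1

theorem cyc_iterate (d k : ℕ) (z : ZMod d) : (cyc d)^[k] z = z + (k : ZMod d) := by
  induction k generalizing z with
  | zero => simp
  | succ n ih =>
    rw [Function.iterate_succ_apply, ih]
    show z + 1 + (n : ZMod d) = z + ((n + 1 : ℕ) : ZMod d)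
    push_cast
    ring

theorem iter_congr_mod {γ : Type} {c : γ → γ} {u : γ} (hu : u ∈ Function.periodicPts c)
    {d : ℕ} (hd : d ∣ Function.minimalPeriod c u) :
    ∀ {a b : ℕ}, c^[a] u = c^[b] u → (a : ZMod d) = (b : ZMod d) := by
  have main : ∀ {a b : ℕ}, a ≤ b → c^[a] u = c^[b] u → (a : ZMod d) = (b : ZMod d) := by
    intro a b hab h
    have h2 : Function.IsPeriodicPt c (b - a) (c^[a] u) := by
      show c^[b - a] (c^[a] u) = c^[a] u
      rw [← Function.iterate_add_apply, Nat.sub_add_cancel hab, ← h]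
    have h3 := h2.minimalPeriod_dvd
    rw [Function.minimalPeriod_apply_iterate hu a] at h3
    have h4 : d ∣ b - a := dvd_trans hd h3
    have hb : (b : ZMod d) = ((a + (b - a) : ℕ) : ZMod d) := by rw [Nat.add_sub_cancel' hab]
    rw [hb]
    push_cast
    rw [(ZMod.natCast_eq_zero_iff _ d).mpr h4]
    ring
  intro a b h
  rcases le_total a b with hab | hab
  · exact main hab h
  · exact (main hab h.symm).symm

theorem exists_periodicPt {γ : Type} [Finite γ] (c : γ → γ) (t₀ : γ) :
    ∃ u : γ, u ∈ Function.periodicPts c := by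
  obtain ⟨i, j, hne, hij⟩ := Finite.exists_ne_map_eq_of_infinite (fun n : ℕ => c^[n] t₀)
  have key : ∀ i j : ℕ, i < j → c^[i] t₀ = c^[j] t₀ → ∃ u : γ, u ∈ Function.periodicPts c := by
    intro i j hlt h
    refine ⟨c^[i] t₀, Function.mk_mem_periodicPts (Nat.sub_pos_of_lt hlt) ?_⟩
    show c^[j - i] (c^[i] t₀) = c^[i] t₀
    rw [← Function.iterate_add_apply, Nat.sub_add_cancel hlt.le, ← h]
  rcases lt_or_gt_of_ne hne with hlt | hlt
  · exact key i j hlt hij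
  · exact key j i hlt hij.symm

theorem minimalPeriod_le_nat_card {γ : Type} [Finite γ] (c : γ → γ) (u : γ) :
    Function.minimalPeriod c u ≤ Nat.card γ := by
  set p := Function.minimalPeriod c u with hp
  have hinj : Function.Injective (fun i : Fin p => c^[i.1] u) := by
    intro i j hij
    exact Fin.ext (Function.iterate_injOn_Iio_minimalPeriod (by exact i.2) (by exact j.2) hij)
  calc p = Nat.card (Fin p) := by simp
    _ ≤ Nat.card γ := Nat.card_le_card_of_injective _ hinj

/-- Counting morphisms from a connected system into a cycle. -/
theorem hcount_cyc {γ : Type} [Finite γ] {c : γ → γ} (hco : Conn c)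
    {u : γ} (hu : u ∈ Function.periodicPts c) (d : ℕ) [NeZero d] :
    hcount c (cyc d) = if d ∣ Function.minimalPeriod c u then d else 0 := by
  set p := Function.minimalPeriod c u with hpdef
  have hlaw : ∀ (h : Mor c (cyc d)) (t : γ) (m n : ℕ), c^[m] t = c^[n] u →
      h.1 t + (m : ZMod d) = h.1 u + (n : ZMod d) := by
    intro h t m n hmn
    have h1 : h.1 (c^[m] t) = h.1 t + (m : ZMod d) := by rw [mor_iterate h, cyc_iterate]
    have h2 : h.1 (c^[n] u) = h.1 u + (n : ZMod d) := by rw [mor_iterate h, cyc_iterate]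
    rw [← h1, ← h2, hmn]
  split_ifs with hdp
  · -- count is d
    obtain ⟨mw, nw, hw⟩ : ∃ (mw nw : γ → γ → ℕ), ∀ a b, c^[mw a b] a = c^[nw a b] b := by
      choose mw nw hw using hco.2
      exact ⟨mw, nw, hw⟩
    have basecomm : ∀ t : γ, ((nw (c t) u : ZMod d) - (mw (c t) u : ZMod d))
        = ((nw t u : ZMod d) - (mw t u : ZMod d)) + 1 := by
      intro t
      have hA : c^[mw (c t) u + 1] t = c^[nw (c t) u] u := by
        rw [Function.iterate_succ_apply]; exact hw (c t) u
      have hB : c^[mw t u] t = c^[nw t u] u := hw t u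
      have hAB : c^[mw t u + nw (c t) u] u = c^[mw (c t) u + 1 + nw t u] u := by
        have e1 : c^[mw t u + (mw (c t) u + 1)] t = c^[mw t u + nw (c t) u] u := by
          rw [Function.iterate_add_apply c (mw t u) (mw (c t) u + 1) t, hA,
            ← Function.iterate_add_apply]
        have e2 : c^[mw (c t) u + 1 + mw t u] t = c^[mw (c t) u + 1 + nw t u] u := by
          rw [Function.iterate_add_apply c (mw (c t) u + 1) (mw t u) t, hB,
            ← Function.iterate_add_apply]
        rw [← e1, ← e2, Nat.add_comm]
      have := iter_congr_mod hu hdp hAB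
      push_cast at this
      linear_combination this
    set base : Mor c (cyc d) := ⟨fun t => (nw t u : ZMod d) - (mw t u : ZMod d),
      fun t => basecomm t⟩ with hbase
    have heval : ∀ (h : Mor c (cyc d)) (t : γ),
        h.1 t = h.1 u + (nw t u : ZMod d) - (mw t u : ZMod d) := by
      intro h t
      have := hlaw h t (mw t u) (nw t u) (hw t u)
      linear_combination this
    have e : Mor c (cyc d) ≃ ZMod d := by
      refine Equiv.ofBijective (fun h => h.1 u) ⟨?_, ?_⟩
      · intro h h' hval
        have hval' : h.1 u = h'.1 u := hval
        apply Subtype.ext; funext t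
        rw [heval h t, heval h' t, hval']
      · intro z
        refine ⟨⟨fun t => base.1 t + (z - base.1 u), fun t => ?_⟩, ?_⟩
        · show base.1 (c t) + (z - base.1 u) = cyc d (base.1 t + (z - base.1 u))
          have := basecomm t
          show base.1 (c t) + (z - base.1 u) = (base.1 t + (z - base.1 u)) + 1
          linear_combination this
        · show base.1 u + (z - base.1 u) = z
          ring
    rw [hcount, Nat.card_congr e, Nat.card_zmod]
  · -- count is 0
    rw [hcount, Nat.card_eq_zero]
    left
    refine ⟨fun h => hdp ?_⟩
    have hper : c^[p] u = u := Function.isPeriodicPt_minimalPeriod c u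
    have := hlaw h u 0 p (by rw [hper]; rfl)
    have hz : ((p : ℕ) : ZMod d) = 0 := by
      push_cast at this
      linear_combination -this
    exact (ZMod.natCast_eq_zero_iff p d).mp hz

theorem hcount_pos_of_fixedPt {γ α : Type} [Finite γ] [Finite α] (hne : Nonempty γ)
    (c : γ → γ) {f : α → α} {a : α} (ha : f a = a) : 0 < hcount c f := by
  refine Nat.card_pos_iff.mpr ⟨⟨⟨fun _ => a, fun t => ha.symm⟩⟩, ?_⟩
  unfold Mor; infer_instance

theorem fixed_iter_of_hcount_pos {γ α : Type} {c : γ → γ} {f : α → α}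
    (hpos : 0 < hcount c f) {u : γ} (hu : u ∈ Function.periodicPts c) :
    ∃ a : α, f^[Function.minimalPeriod c u] a = a := by
  obtain ⟨⟨h⟩, -⟩ := Nat.card_pos_iff.mp hpos
  refine ⟨h.1 u, ?_⟩
  rw [← mor_iterate h, Function.isPeriodicPt_minimalPeriod c u]

end Cycles

section FixedCounts

theorem fddsIso_fixed_count {α β : Type} {u : α → α} {v : β → β} (h : FddsIso u v) :
    Nat.card {a : α // u a = a} = Nat.card {b : β // v b = b} := by
  obtain ⟨e, he⟩ := FddsIso.pointwise.mp h
  refine Nat.card_congr (Equiv.subtypeEquiv e fun a => ⟨fun ha => ?_, fun hb => ?_⟩)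
  · rw [← he, ha]
  · exact e.injective (by rw [he, hb])

noncomputable def sigFixedEquiv {J : Type} {β : J → Type} (G : ∀ j, β j → β j) :
    {x : Σ j, β j // sigMap G x = x} ≃ Σ j, {z : β j // G j z = z} where
  toFun x := ⟨x.1.1, x.1.2, eq_of_heq (Sigma.ext_iff.mp x.2).2⟩
  invFun p := ⟨⟨p.1, p.2.1⟩, congrArg (Sigma.mk p.1) p.2.2⟩
  left_inv x := rfl
  right_inv p := rfl

theorem cyc_fixed_count (d : ℕ) [NeZero d] :
    Nat.card {z : ZMod d // cyc d z = z} = if d = 1 then 1 else 0 := by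
  split_ifs with hd
  · subst hd
    haveI : Nonempty {z : ZMod 1 // cyc 1 z = z} := ⟨⟨0, Subsingleton.elim _ _⟩⟩
    haveI : Subsingleton {z : ZMod 1 // cyc 1 z = z} :=
      ⟨fun a b => Subtype.ext (Subsingleton.elim _ _)⟩
    exact Nat.card_unique
  · rw [Nat.card_eq_zero]
    left
    refine ⟨fun z => ?_⟩
    have h1 : ((1 : ℕ) : ZMod d) = 0 := by
      have h2 : (z.1 : ZMod d) + 1 = z.1 := z.2
      push_cast
      linear_combination h2
    exact hd (Nat.dvd_one.mp ((ZMod.natCast_eq_zero_iff 1 d).mp h1))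

end FixedCounts

section CycSum

/-- lcm of a finite set of naturals. -/
def lcmF (I : Finset ℕ) : ℕ := I.lcm id

variable {S : Finset (Finset ℕ)} {M : ℕ}

/-- Carrier: disjoint union of cycles `C_{lcmF I}`, `M / lcmF I` copies each. -/
def cycCarrier (S : Finset (Finset ℕ)) (M : ℕ) : Type :=
  Σ j : (Σ I : {I // I ∈ S}, Fin (M / lcmF I.1)), ZMod (lcmF j.1.1)

def cycSys (S : Finset (Finset ℕ)) (M : ℕ) : cycCarrier S M → cycCarrier S M :=
  sigMap (fun j => cyc (lcmF j.1.1))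

theorem cycCarrier_finite (hS : ∀ I ∈ S, lcmF I ≠ 0) : Finite (cycCarrier S M) := by
  letI : ∀ j : (Σ I : {I // I ∈ S}, Fin (M / lcmF I.1)), NeZero (lcmF j.1.1) :=
    fun j => ⟨hS j.1.1 j.1.2⟩
  unfold cycCarrier; infer_instance

theorem sum_over_pairs (F : (Σ I : {I // I ∈ S}, Fin (M / lcmF I.1)) → ℕ) :
    ∑ j, F j = ∑ I : {I // I ∈ S}, ∑ v : Fin (M / lcmF I.1), F ⟨I, v⟩ := by
  rw [← Finset.univ_sigma_univ, Finset.sum_sigma]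

theorem hcount_cycSys {γ : Type} [Finite γ] {c : γ → γ} (hco : Conn c)
    {u : γ} (hu : u ∈ Function.periodicPts c)
    (hS0 : ∀ I ∈ S, lcmF I ≠ 0) (hSM : ∀ I ∈ S, lcmF I ∣ M) :
    hcount c (cycSys S M)
      = M * ((S.filter (fun I => lcmF I ∣ Function.minimalPeriod c u)).card) := by
  classical
  letI : ∀ j : (Σ I : {I // I ∈ S}, Fin (M / lcmF I.1)), NeZero (lcmF j.1.1) :=
    fun j => ⟨hS0 j.1.1 j.1.2⟩
  set p := Function.minimalPeriod c u with hp
  calc hcount c (cycSys S M)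
      = ∑ j : (Σ I : {I // I ∈ S}, Fin (M / lcmF I.1)), hcount c (cyc (lcmF j.1.1)) :=
        hcount_sigma hco.1 hco.2 _
    _ = ∑ j : (Σ I : {I // I ∈ S}, Fin (M / lcmF I.1)),
          (if lcmF j.1.1 ∣ p then lcmF j.1.1 else 0) :=
        Finset.sum_congr rfl (fun j _ => hcount_cyc hco hu _)
    _ = ∑ I : {I // I ∈ S}, ∑ _v : Fin (M / lcmF I.1),
          (if lcmF I.1 ∣ p then lcmF I.1 else 0) := sum_over_pairs _
    _ = ∑ I : {I // I ∈ S}, (if lcmF I.1 ∣ p then M else 0) := by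
        refine Finset.sum_congr rfl (fun I _ => ?_)
        rw [Finset.sum_const, Finset.card_univ, Fintype.card_fin, smul_eq_mul, mul_ite,
          mul_zero, Nat.div_mul_cancel (hSM I.1 I.2)]
    _ = ∑ I ∈ S, (if lcmF I ∣ p then M else 0) :=
        Finset.sum_coe_sort S (fun I => if lcmF I ∣ p then M else 0)
    _ = ∑ _I ∈ S.filter (fun I => lcmF I ∣ p), M := (Finset.sum_filter _ _).symm
    _ = M * (S.filter (fun I => lcmF I ∣ p)).card := by
        rw [Finset.sum_const, smul_eq_mul, mul_comm]

theorem fixed_cycSys (hS0 : ∀ I ∈ S, lcmF I ≠ 0) :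
    Nat.card {x : cycCarrier S M // cycSys S M x = x}
      = M * ((S.filter (fun I => lcmF I = 1)).card) := by
  classical
  letI : ∀ j : (Σ I : {I // I ∈ S}, Fin (M / lcmF I.1)), NeZero (lcmF j.1.1) :=
    fun j => ⟨hS0 j.1.1 j.1.2⟩
  calc Nat.card {x : cycCarrier S M // cycSys S M x = x}
      = Nat.card (Σ j : (Σ I : {I // I ∈ S}, Fin (M / lcmF I.1)),
          {z : ZMod (lcmF j.1.1) // cyc (lcmF j.1.1) z = z}) :=
        Nat.card_congr (@sigFixedEquiv (Σ I : {I // I ∈ S}, Fin (M / lcmF I.1))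
          (fun j => ZMod (lcmF j.1.1)) (fun j => cyc (lcmF j.1.1)))
    _ = ∑ j : (Σ I : {I // I ∈ S}, Fin (M / lcmF I.1)),
          Nat.card {z : ZMod (lcmF j.1.1) // cyc (lcmF j.1.1) z = z} := nat_card_sigma _
    _ = ∑ j : (Σ I : {I // I ∈ S}, Fin (M / lcmF I.1)),
          (if lcmF j.1.1 = 1 then 1 else 0) :=
        Finset.sum_congr rfl (fun j _ => cyc_fixed_count _)
    _ = ∑ I : {I // I ∈ S}, ∑ _v : Fin (M / lcmF I.1),
          (if lcmF I.1 = 1 then 1 else 0) := sum_over_pairs _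
    _ = ∑ I : {I // I ∈ S}, (if lcmF I.1 = 1 then M else 0) := by
        refine Finset.sum_congr rfl (fun I _ => ?_)
        rw [Finset.sum_const, Finset.card_univ, Fintype.card_fin, smul_eq_mul, mul_ite,
          mul_one, mul_zero]
        split_ifs with h
        · rw [h, Nat.div_one]
        · rfl
    _ = ∑ I ∈ S, (if lcmF I = 1 then M else 0) :=
        Finset.sum_coe_sort S (fun I => if lcmF I = 1 then M else 0)
    _ = ∑ _I ∈ S.filter (fun I => lcmF I = 1), M := (Finset.sum_filter _ _).symm
    _ = M * (S.filter (fun I => lcmF I = 1)).card := by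
        rw [Finset.sum_const, smul_eq_mul, mul_comm]

end CycSum

theorem cancelable_fix {α : Type} [Fintype α] (f : α → α) (hca : Cancelable f) :
    ∃ a, f a = a := by
  by_contra hfix
  push_neg at hfix
  classical
  set N := Nat.card α with hN
  set E : Finset ℕ := (Finset.Icc 1 N).filter (fun e => ∃ a, f^[e] a = a) with hE
  set M := E.lcm id with hM
  have hE2 : ∀ ℓ ∈ E, 2 ≤ ℓ := by
    intro ℓ hℓ
    rw [hE, Finset.mem_filter, Finset.mem_Icc] at hℓ
    obtain ⟨⟨h1, -⟩, a, ha⟩ := hℓ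
    by_contra h
    have hℓ1 : ℓ = 1 := by omega
    subst hℓ1
    exact hfix a (by simpa using ha)
  have hM0 : M ≠ 0 := by
    rw [hM]
    intro h
    rw [Finset.lcm_eq_zero_iff] at h
    obtain ⟨ℓ, hℓ, h0⟩ := h
    have h2 := hE2 ℓ hℓ
    rw [id] at h0
    omega
  have hdvd : ∀ I ∈ E.powerset, lcmF I ∣ M := by
    intro I hI
    exact Finset.lcm_dvd fun b hb => Finset.dvd_lcm (Finset.mem_powerset.mp hI hb)
  have h0 : ∀ I ∈ E.powerset, lcmF I ≠ 0 := by
    intro I hI h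
    exact hM0 (Nat.eq_zero_of_zero_dvd (h ▸ hdvd I hI))
  have hcatch : ∀ p : ℕ, 0 < p → (∃ a, f^[p] a = a) → ∃ ℓ ∈ E, ℓ ∣ p := by
    rintro p hp ⟨a, ha⟩
    have hpa : Function.IsPeriodicPt f p a := ha
    have hmem : a ∈ Function.periodicPts f := Function.mk_mem_periodicPts hp hpa
    refine ⟨Function.minimalPeriod f a, ?_, hpa.minimalPeriod_dvd⟩
    rw [hE, Finset.mem_filter, Finset.mem_Icc]
    exact ⟨⟨Function.minimalPeriod_pos_of_mem_periodicPts hmem,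
      minimalPeriod_le_nat_card f a⟩, a, Function.isPeriodicPt_minimalPeriod f a⟩
  set Bs : Finset (Finset ℕ) := E.powerset.filter (fun I => Even I.card) with hBs
  set Cs : Finset (Finset ℕ) := E.powerset.filter (fun I => ¬ Even I.card) with hCs
  have hBsub : Bs ⊆ E.powerset := Finset.filter_subset _ _
  have hCsub : Cs ⊆ E.powerset := Finset.filter_subset _ _
  -- the involution, transported between the two filtered families
  have hcard : ∀ p : ℕ, (∃ ℓ ∈ E, ℓ ∣ p) →
      (Bs.filter (fun I => lcmF I ∣ p)).card = (Cs.filter (fun I => lcmF I ∣ p)).card := by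
    rintro p ⟨ℓ₀, hℓ₀E, hℓ₀p⟩
    have hmem : ∀ {I : Finset ℕ} {Par : Finset ℕ → Prop} [DecidablePred Par],
        I ∈ (E.powerset.filter Par).filter (fun I => lcmF I ∣ p) ↔
          (I ⊆ E ∧ Par I ∧ lcmF I ∣ p) := by
      intro I Par _
      simp [Finset.mem_filter, Finset.mem_powerset, and_assoc]
    have himg : ∀ (I : Finset ℕ), I ⊆ E → lcmF I ∣ p →
        ((if ℓ₀ ∈ I then I.erase ℓ₀ else insert ℓ₀ I) ⊆ E
          ∧ lcmF (if ℓ₀ ∈ I then I.erase ℓ₀ else insert ℓ₀ I) ∣ p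
          ∧ ((if ℓ₀ ∈ I then I.erase ℓ₀ else insert ℓ₀ I).card = I.card - 1 ∧ 1 ≤ I.card
              ∨ (if ℓ₀ ∈ I then I.erase ℓ₀ else insert ℓ₀ I).card = I.card + 1)) := by
      intro I hIE hIp
      by_cases hℓI : ℓ₀ ∈ I
      · rw [if_pos hℓI]
        refine ⟨fun x hx => hIE (Finset.mem_of_mem_erase hx), ?_, Or.inl ⟨Finset.card_erase_of_mem hℓI, Finset.card_pos.mpr ⟨ℓ₀, hℓI⟩⟩⟩
        exact Finset.lcm_dvd fun b hb =>
          dvd_trans (Finset.dvd_lcm (Finset.mem_of_mem_erase hb)) hIp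
      · rw [if_neg hℓI]
        refine ⟨Finset.insert_subset hℓ₀E hIE, ?_, Or.inr (Finset.card_insert_of_notMem hℓI)⟩
        rw [lcmF, Finset.lcm_insert]
        exact lcm_dvd hℓ₀p hIp
    have hinv : ∀ (I : Finset ℕ),
        (if ℓ₀ ∈ (if ℓ₀ ∈ I then I.erase ℓ₀ else insert ℓ₀ I)
          then (if ℓ₀ ∈ I then I.erase ℓ₀ else insert ℓ₀ I).erase ℓ₀
          else insert ℓ₀ (if ℓ₀ ∈ I then I.erase ℓ₀ else insert ℓ₀ I)) = I := by
      intro I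
      by_cases hℓI : ℓ₀ ∈ I
      · rw [if_pos hℓI, if_neg (Finset.notMem_erase ℓ₀ I), Finset.insert_erase hℓI]
      · rw [if_neg hℓI, if_pos (Finset.mem_insert_self ℓ₀ I), Finset.erase_insert hℓI]
    refine Finset.card_bij' (i := fun I _ => if ℓ₀ ∈ I then I.erase ℓ₀ else insert ℓ₀ I)
      (j := fun I _ => if ℓ₀ ∈ I then I.erase ℓ₀ else insert ℓ₀ I) ?_ ?_ ?_ ?_
    · intro I hI
      beta_reduce
      rw [hmem] at hI ⊢
      obtain ⟨hIE, hpar, hIp⟩ := hI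
      obtain ⟨h1, h2, h3⟩ := himg I hIE hIp
      refine ⟨h1, ?_, h2⟩
      rw [Nat.even_iff] at hpar ⊢
      rcases h3 with ⟨hc, hc1⟩ | hc <;> omega
    · intro I hI
      beta_reduce
      rw [hmem] at hI ⊢
      obtain ⟨hIE, hpar, hIp⟩ := hI
      obtain ⟨h1, h2, h3⟩ := himg I hIE hIp
      refine ⟨h1, ?_, h2⟩
      rw [Nat.even_iff] at hpar ⊢
      rcases h3 with ⟨hc, hc1⟩ | hc <;> omega
    · intro I _; beta_reduce; exact hinv I
    · intro I _; beta_reduce; exact hinv I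
  -- morphism counts agree for all connected sources
  haveI hBfin : Finite (cycCarrier Bs M) := cycCarrier_finite (fun I hI => h0 I (hBsub hI))
  haveI hCfin : Finite (cycCarrier Cs M) := cycCarrier_finite (fun I hI => h0 I (hCsub hI))
  have key : ∀ (γ : Type) [Finite γ] (c : γ → γ), Conn c →
      hcount c (Prod.map f (cycSys Bs M)) = hcount c (Prod.map f (cycSys Cs M)) := by
    intro γ _ c hco
    rw [hcount_prod, hcount_prod]
    rcases Nat.eq_zero_or_pos (hcount c f) with hz | hpos
    · rw [hz, Nat.zero_mul, Nat.zero_mul]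
    obtain ⟨u, hu⟩ := exists_periodicPt c (Classical.choice hco.1)
    have hp0 : 0 < Function.minimalPeriod c u :=
      Function.minimalPeriod_pos_of_mem_periodicPts hu
    have hfixp := fixed_iter_of_hcount_pos hpos hu
    obtain ⟨ℓ₀, hℓ₀E, hℓ₀p⟩ := hcatch _ hp0 hfixp
    rw [hcount_cycSys hco hu (fun I hI => h0 I (hBsub hI)) (fun I hI => hdvd I (hBsub hI)),
      hcount_cycSys hco hu (fun I hI => h0 I (hCsub hI)) (fun I hI => hdvd I (hCsub hI)),
      hcard _ ⟨ℓ₀, hℓ₀E, hℓ₀p⟩]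
  have iso := lovasz_conn key
  letI : Fintype (cycCarrier Bs M) := Fintype.ofFinite _
  letI : Fintype (cycCarrier Cs M) := Fintype.ofFinite _
  have isoBC := hca _ _ (cycSys Bs M) (cycSys Cs M) iso
  have hfc := fddsIso_fixed_count isoBC
  rw [fixed_cycSys (fun I hI => h0 I (hBsub hI)),
    fixed_cycSys (fun I hI => h0 I (hCsub hI))] at hfc
  have hBfilter : Bs.filter (fun I => lcmF I = 1) = {∅} := by
    apply Finset.eq_singleton_iff_unique_mem.mpr
    constructor
    · rw [Finset.mem_filter, hBs, Finset.mem_filter]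
      exact ⟨⟨Finset.empty_mem_powerset E, by simp⟩, by simp [lcmF]⟩
    · intro I hI
      rw [Finset.mem_filter, hBs, Finset.mem_filter, Finset.mem_powerset] at hI
      obtain ⟨⟨hIE, -⟩, hL1⟩ := hI
      apply Finset.eq_empty_iff_forall_notMem.mpr
      intro ℓ hℓ
      have h2 := hE2 ℓ (hIE hℓ)
      have hdl : ℓ ∣ lcmF I := Finset.dvd_lcm hℓ
      rw [hL1] at hdl
      have h3 := Nat.dvd_one.mp hdl
      omega
  have hCfilter : Cs.filter (fun I => lcmF I = 1) = ∅ := by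
    apply Finset.eq_empty_iff_forall_notMem.mpr
    intro I hI
    rw [Finset.mem_filter, hCs, Finset.mem_filter, Finset.mem_powerset] at hI
    obtain ⟨⟨hIE, hodd⟩, hL1⟩ := hI
    apply hodd
    have hIempty : I = ∅ := by
      apply Finset.eq_empty_iff_forall_notMem.mpr
      intro ℓ hℓ
      have h2 := hE2 ℓ (hIE hℓ)
      have hdl : ℓ ∣ lcmF I := Finset.dvd_lcm hℓ
      rw [hL1] at hdl
      have h3 := Nat.dvd_one.mp hdl
      omega
    rw [hIempty]
    simp
  rw [hBfilter, hCfilter] at hfc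
  simp at hfc
  exact hM0 hfc


/-- A constant-free polynomial `P = Σ_{i=1}^m A_i X^i` with at least
one cancelable coefficient is injective up to isomorphism. -/
theorem polyNC_injective_of_cancelable {m : ℕ} {γ : Fin m → Type} [∀ i, Fintype (γ i)]
    (g : ∀ i, γ i → γ i) (hc : ∃ i : Fin m, Cancelable (g i))
    {α β : Type} [Fintype α] [Fintype β] (f : α → α) (f' : β → β)
    (h : FddsIso (polyEvalNC g f) (polyEvalNC g f')) :
    FddsIso f f' := by

  obtain ⟨i₀, hi₀⟩ := hc
  obtain ⟨a₀, ha₀⟩ := cancelable_fix (g i₀) hi₀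
  apply lovasz_conn
  intro T _ t hco
  have hP := hcount_congr_right t h
  have expand : ∀ {δ : Type} [Fintype δ] (x : δ → δ),
      hcount t (polyEvalNC g x) = ∑ i : Fin m, hcount t (g i) * (hcount t x) ^ (i.1 + 1) := by
    intro δ _ x
    calc hcount t (polyEvalNC g x)
        = ∑ i : Fin m, hcount t (Prod.map (g i) (powMap x (i.1 + 1))) :=
          hcount_sigma hco.1 hco.2 (fun i : Fin m => Prod.map (g i) (powMap x (i.1 + 1)))
      _ = ∑ i : Fin m, hcount t (g i) * hcount t (powMap x (i.1 + 1)) :=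
          Finset.sum_congr rfl (fun i _ => hcount_prod t (g i) (powMap x (i.1 + 1)))
      _ = ∑ i : Fin m, hcount t (g i) * (hcount t x) ^ (i.1 + 1) :=
          Finset.sum_congr rfl (fun i _ => by rw [hcount_pow])
  rw [expand f, expand f'] at hP
  have ha : 0 < hcount t (g i₀) := hcount_pos_of_fixedPt hco.1 t ha₀
  have mono : StrictMono (fun x : ℕ => ∑ i : Fin m, hcount t (g i) * x ^ (i.1 + 1)) := by
    intro x y hxy
    apply Finset.sum_lt_sum
    · intro i _
      exact Nat.mul_le_mul_left _ (Nat.pow_le_pow_left hxy.le _)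
    · exact ⟨i₀, Finset.mem_univ _,
        mul_lt_mul_of_pos_left (Nat.pow_lt_pow_left hxy (Nat.succ_ne_zero i₀.1)) ha⟩
  exact mono.injective hP
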